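/- Let G be a Hausdorff zero-dimensional topological gyrogroup (i.e. G has a base of sets that are both open and closed) and let H be a locally compact strongly L-subgyrogroup of G. Then the quotient space G/H is zero-dimensional. -/

import Mathlib

universe u

/-- A gyrogroup: a groupoid with identity, inverses, gyroautomorphisms satisfying the
left gyroassociative law and the left loop property. -/
class Gyrogroup (G : Type u) where
  add : G → G → G
  zero : G
  neg : G → G
  gyr : G → G → G → G
  zero_add : ∀ x, add zero x = x
  add_zero : ∀ x, add x zero = x
  neg_add : ∀ x, add (neg x) x = zero
  add_neg : ∀ x, add x (neg x) = zero
  gyr_bijective : ∀ a b, Function.Bijective (gyr a b)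
  gyr_add : ∀ a b x y, gyr a b (add x y) = add (gyr a b x) (gyr a b y)
  gyrassoc : ∀ a b z, add a (add b z) = add (add a b) (gyr a b z)
  loop : ∀ a b, gyr (add a b) b = gyr a b

/-- A topological gyrogroup: the operation is jointly continuous and inversion is continuous. -/
class TopologicalGyrogroup (G : Type u) [TopologicalSpace G] [Gyrogroup G] : Prop where
  continuous_add : Continuous fun p : G × G => Gyrogroup.add p.1 p.2
  continuous_neg : Continuous (Gyrogroup.neg : G → G)

/-- `H` is a subgyrogroup of `G` (by the subgyrogroup criterion: nonempty and closed
under the operation and inversion; this is equivalent to `(H, ⊕|H)` being itself a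
gyrogroup whose gyroautomorphisms are the restrictions of those of `G`). -/
structure IsSubgyrogroup {G : Type u} [Gyrogroup G] (H : Set G) : Prop where
  nonempty : H.Nonempty
  add_mem : ∀ ⦃a⦄, a ∈ H → ∀ ⦃b⦄, b ∈ H → Gyrogroup.add a b ∈ H
  neg_mem : ∀ ⦃a⦄, a ∈ H → Gyrogroup.neg a ∈ H

/-- An `L`-subgyrogroup: a subgyrogroup with `gyr[a,h](H) = H` for all `a ∈ G`, `h ∈ H`. -/
structure IsLSubgyrogroup {G : Type u} [Gyrogroup G] (H : Set G)
    extends IsSubgyrogroup H : Prop where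
  gyr_image : ∀ (a : G), ∀ ⦃h⦄, h ∈ H → Gyrogroup.gyr a h '' H = H

/-- A strongly `L`-subgyrogroup: a subgyrogroup with `gyr[a,b](H) ⊆ H` for all `a, b ∈ G`. -/
structure IsStronglyLSubgyrogroup {G : Type u} [Gyrogroup G] (H : Set G)
    extends IsSubgyrogroup H : Prop where
  gyr_image_subset : ∀ a b : G, Gyrogroup.gyr a b '' H ⊆ H

/-- The pointwise sum `A ⊕ B = {a ⊕ b : a ∈ A, b ∈ B}` of two subsets. -/
def setAdd {G : Type u} [Gyrogroup G] (A B : Set G) : Set G :=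
  Set.image2 Gyrogroup.add A B

/-- The left coset `a ⊕ H = {a ⊕ h : h ∈ H}`. -/
def lCoset {G : Type u} [Gyrogroup G] (H : Set G) (a : G) : Set G :=
  (fun h => Gyrogroup.add a h) '' H

/-- The setoid on `G` identifying points with the same left coset modulo `H`. -/
def cosetSetoid {G : Type u} [Gyrogroup G] (H : Set G) : Setoid G :=
  ⟨fun x y => lCoset H x = lCoset H y,
   ⟨fun _ => rfl, fun h => h.symm, fun h₁ h₂ => h₁.trans h₂⟩⟩

/-- The coset space `G/H`, carrying the quotient topology: a set `O ⊆ G/H` is open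
iff `π⁻¹(O)` is open in `G`. -/
abbrev GyroQuot {G : Type u} [Gyrogroup G] (H : Set G) : Type u :=
  Quotient (cosetSetoid H)

/-- The natural quotient map `π : G → G/H`, `a ↦ a ⊕ H`. -/
def qmap {G : Type u} [Gyrogroup G] (H : Set G) (a : G) : GyroQuot H :=
  Quotient.mk (cosetSetoid H) a

/-- A zero-dimensional space: one having a base consisting of clopen sets. -/
def IsZeroDimensional (X : Type*) [TopologicalSpace X] : Prop :=
  ∃ B : Set (Set X), (∀ U ∈ B, IsClopen U) ∧ TopologicalSpace.IsTopologicalBasis B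

section GyroAlgebra

open Gyrogroup

variable {G : Type u} [Gyrogroup G]

local instance : Add G := ⟨Gyrogroup.add⟩
local instance : Neg G := ⟨Gyrogroup.neg⟩
local instance : Zero G := ⟨Gyrogroup.zero⟩

namespace GG

theorem add_def (a b : G) : a + b = Gyrogroup.add a b := rfl
theorem neg_def (a : G) : -a = Gyrogroup.neg a := rfl
theorem zero_def : (0 : G) = Gyrogroup.zero := rfl

theorem zero_add' (a : G) : (0 : G) + a = a := Gyrogroup.zero_add a
theorem add_zero' (a : G) : a + (0 : G) = a := Gyrogroup.add_zero a
theorem neg_add' (a : G) : -a + a = (0 : G) := Gyrogroup.neg_add a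
theorem add_neg' (a : G) : a + -a = (0 : G) := Gyrogroup.add_neg a
theorem gyrassoc' (a b z : G) : a + (b + z) = (a + b) + gyr a b z := Gyrogroup.gyrassoc a b z
theorem gyr_add' (a b x y : G) : gyr a b (x + y) = gyr a b x + gyr a b y := Gyrogroup.gyr_add a b x y
theorem loop' (a b : G) : gyr (a + b) b = gyr a b := Gyrogroup.loop a b

theorem gyr_inj {a b : G} {x y : G} (h : gyr a b x = gyr a b y) : x = y :=
  (Gyrogroup.gyr_bijective a b).1 h

theorem neg_add_cancel_left (a x : G) : -a + (a + x) = gyr (-a) a x := by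
  rw [gyrassoc', neg_add', zero_add']

theorem add_left_cancel {a x y : G} (h : a + x = a + y) : x = y := by
  have h2 : -a + (a + x) = -a + (a + y) := by rw [h]
  rw [neg_add_cancel_left, neg_add_cancel_left] at h2
  exact gyr_inj h2

theorem gyr_zero_left (b z : G) : gyr (0 : G) b z = z := by
  have := gyrassoc' (0 : G) b z
  rw [zero_add', zero_add'] at this
  exact (add_left_cancel this).symm

theorem gyr_neg_self (a : G) (z : G) : gyr (-a) a z = z := by
  have := congrArg (fun f => f z) (loop' (-a) a)
  rw [neg_add'] at this
  rw [← this, gyr_zero_left]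

theorem neg_cancel_left (a x : G) : -a + (a + x) = x := by
  rw [neg_add_cancel_left, gyr_neg_self]

theorem gyr_self_neg (a : G) (z : G) : gyr a (-a) z = z := by
  have := congrArg (fun f => f z) (loop' a (-a))
  rw [add_neg'] at this
  rw [← this, gyr_zero_left]

theorem cancel_left (a x : G) : a + (-a + x) = x := by
  rw [gyrassoc', add_neg', zero_add', gyr_self_neg]

theorem eq_neg_of_add_eq_zero {x y : G} (h : x + y = 0) : y = -x := by
  have : -x + (x + y) = -x + (0:G) := by rw [h]
  rw [neg_cancel_left, add_zero'] at this
  exact this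

theorem neg_neg' (a : G) : -(-a) = a := by
  have := eq_neg_of_add_eq_zero (neg_add' a)
  exact this.symm

theorem neg_zero' : -(0 : G) = 0 := by
  have := eq_neg_of_add_eq_zero (zero_add' (0:G))
  exact this.symm

theorem gyr_zero (a b : G) : gyr a b (0 : G) = 0 := by
  have := gyrassoc' a b (0:G)
  rw [add_zero'] at this
  have h2 : (a+b) + (0:G) = (a+b) + gyr a b (0:G) := by rw [add_zero']; exact this
  exact (add_left_cancel h2).symm

theorem gyr_neg (a b x : G) : gyr a b (-x) = -(gyr a b x) := by
  have h : gyr a b (-x) + gyr a b x = 0 := by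
    rw [← gyr_add', neg_add', gyr_zero]
  have := eq_neg_of_add_eq_zero h
  rw [this, neg_neg']

theorem gyrosum (a b : G) : -(a + b) = gyr a b (-b + -a) := by
  have h : (a + b) + gyr a b (-b + -a) = 0 := by
    rw [← gyrassoc', cancel_left, add_neg']
  exact (eq_neg_of_add_eq_zero h).symm

theorem gyrator (a b z : G) : gyr a b z = -(a + b) + (a + (b + z)) := by
  rw [gyrassoc' a b z, neg_cancel_left]

theorem same_left (p a b : G) : -(p + a) + (p + b) = gyr p a (-a + b) := by
  conv_lhs => rw [show p + b = (p + a) + gyr p a (-a + b) by rw [← gyrassoc', cancel_left]]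
  rw [neg_cancel_left]

theorem gyr_inv_cancel (a b z : G) : gyr (-b) (-a) (gyr a b z) = z := by
  set w := gyr a b z with hw
  have h1 : (a + b) + w = a + (b + z) := (gyrassoc' a b z).symm
  have hz : z = -b + (-a + ((a+b) + w)) := by rw [h1, neg_cancel_left, neg_cancel_left]
  have h2 : -b + (-a + ((a+b)+w)) = (-b + -a) + gyr (-b) (-a) ((a+b)+w) := gyrassoc' _ _ _
  have h3 : gyr (-b) (-a) ((a+b)+w) = gyr (-b) (-a) (a+b) + gyr (-b) (-a) w := gyr_add' _ _ _ _
  have h4 : gyr (-b) (-a) (a + b) = -(-b + -a) := by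
    have := gyrosum (-b) (-a)
    rw [neg_neg', neg_neg'] at this
    exact this.symm
  rw [h2, h3, h4, cancel_left] at hz
  exact hz.symm

theorem gyr_inv_cancel' (a b z : G) : gyr a b (gyr (-b) (-a) z) = z := by
  have := gyr_inv_cancel (-b) (-a) z
  rw [neg_neg', neg_neg'] at this
  exact this

theorem I1 (a b z : G) : gyr (-a) (a + b) (gyr a b z) = z := by
  rw [gyrator (-a) (a+b)]
  rw [neg_cancel_left]
  rw [← gyrassoc' a b z]
  rw [neg_cancel_left, neg_cancel_left]

theorem I1' (a b w : G) : gyr a b (gyr (-a) (a + b) w) = w := by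
  obtain ⟨z, rfl⟩ := (Gyrogroup.gyr_bijective a b).2 w
  rw [I1]

theorem step5 (b a z : G) : gyr (-(b + a)) b z = gyr b a z := by
  have h1 : gyr (-(b+a)) b (gyr (-b) (b+a) (gyr b a z)) = gyr b a z := by
    have := gyr_inv_cancel (-b) (b+a) (gyr b a z)
    rw [neg_neg'] at this
    exact this
  rw [I1 b a z] at h1
  exact h1

theorem b_decomp (b a : G) : (b + a) + gyr b a (-a) = b := by
  rw [← gyrassoc', add_neg', add_zero']

theorem n_eq (b a : G) : gyr b a (-a) = -(b + a) + b := by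
  have h : -(b+a) + ((b+a) + gyr b a (-a)) = -(b+a) + b := by rw [b_decomp]
  rw [neg_cancel_left] at h
  exact h

theorem nested (b a z : G) : gyr b (gyr b a (-a)) (gyr b a z) = z := by
  set n := gyr b a (-a) with hn
  have hbn : gyr b n = gyr (b + a) n := by
    conv_lhs => rw [← b_decomp b a]
    rw [loop']
  have h1 : gyr (b+a) n (gyr b a z) = z := by
    have := I1 (-(b+a)) b z
    rw [neg_neg'] at this
    rw [← n_eq] at this
    rw [step5] at this
    exact this
  calc gyr b n (gyr b a z) = gyr (b+a) n (gyr b a z) := by rw [hbn]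
    _ = z := h1

theorem rc (b a : G) : (b + gyr b a (-a)) + a = b := by
  set n := gyr b a (-a) with hn
  have key : gyr b n (gyr b a a) = a := nested b a a
  have h1 : b + (n + gyr b a a) = (b + n) + gyr b n (gyr b a a) := gyrassoc' _ _ _
  rw [key] at h1
  have h2 : n + gyr b a a = 0 := by
    rw [hn, ← gyr_add', neg_add', gyr_zero]
  rw [h2, add_zero'] at h1
  exact h1.symm

theorem gyr_self (a z : G) : gyr a a z = z := by
  have := congrArg (fun f => f z) (loop' 0 a)
  rw [zero_add'] at this
  rw [this, gyr_zero_left]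

/-- right division: `rdiv b a ⊕ a = b`. -/
def rdiv (b a : G) : G := b + gyr b a (-a)

theorem rdiv_add (b a : G) : rdiv b a + a = b := rc b a

theorem rdiv_self (a : G) : rdiv a a = 0 := by
  unfold rdiv
  rw [gyr_self, add_neg']

end GG

namespace GG

variable {H : Set G}

theorem zero_mem (hs : IsSubgyrogroup H) : (0 : G) ∈ H := by
  obtain ⟨a, ha⟩ := hs.nonempty
  have := hs.add_mem (hs.neg_mem ha) ha
  rw [← neg_def, ← add_def, neg_add'] at this
  exact this

theorem gyrH (hH : IsStronglyLSubgyrogroup H) (a b : G) {h : G} (hh : h ∈ H) :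
    gyr a b h ∈ H := hH.gyr_image_subset a b ⟨h, hh, rfl⟩

theorem addH (hs : IsSubgyrogroup H) {a b : G} (ha : a ∈ H) (hb : b ∈ H) : a + b ∈ H :=
  hs.add_mem ha hb

theorem negH (hs : IsSubgyrogroup H) {a : G} (ha : a ∈ H) : -a ∈ H := hs.neg_mem ha

theorem mem_lCoset_iff {x y : G} : y ∈ lCoset H x ↔ -x + y ∈ H := by
  constructor
  · rintro ⟨h, hh, rfl⟩
    show -x + (x + h) ∈ H
    rw [neg_cancel_left]; exact hh
  · intro hm
    exact ⟨-x + y, hm, cancel_left x y⟩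

theorem lCoset_add_eq (hH : IsStronglyLSubgyrogroup H) {h : G} (hh : h ∈ H) (x : G) :
    lCoset H (x + h) = lCoset H x := by
  ext z
  rw [mem_lCoset_iff, mem_lCoset_iff]
  have key : -(x + h) + z = gyr x h (-h + (-x + z)) := by
    have := same_left x h (-x + z)
    rw [cancel_left] at this
    exact this
  constructor
  · intro hz
    have hu : gyr x h (-h + (-x + z)) ∈ H := by rw [← key]; exact hz
    have hu2 : -h + (-x + z) ∈ H := by
      have := gyrH hH (-h) (-x) hu
      rw [gyr_inv_cancel] at this
      exact this
    have : h + (-h + (-x + z)) ∈ H := addH hH.toIsSubgyrogroup hh hu2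
    rw [cancel_left] at this
    exact this
  · intro hz
    rw [key]
    exact gyrH hH x h (addH hH.toIsSubgyrogroup (negH hH.toIsSubgyrogroup hh) hz)

theorem lCoset_eq_iff (hH : IsStronglyLSubgyrogroup H) {x y : G} :
    lCoset H x = lCoset H y ↔ -x + y ∈ H := by
  constructor
  · intro he
    have hy : y ∈ lCoset H y := by
      refine ⟨0, zero_mem hH.toIsSubgyrogroup, ?_⟩
      exact add_zero' y
    rw [← he] at hy
    exact mem_lCoset_iff.mp hy
  · intro hm
    have hy : y = x + (-x + y) := (cancel_left x y).symm
    rw [hy]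
    exact (lCoset_add_eq hH hm x).symm

theorem qmap_eq_iff (hH : IsStronglyLSubgyrogroup H) {x y : G} :
    qmap H x = qmap H y ↔ -x + y ∈ H := by
  constructor
  · intro he
    exact (lCoset_eq_iff hH).mp (Quotient.exact he)
  · intro hm
    exact Quotient.sound ((lCoset_eq_iff hH).mpr hm)

/-- The saturation of a set with respect to `H`. -/
def satSet (H : Set G) (A : Set G) : Set G := {x : G | ∃ h ∈ H, x + h ∈ A}

theorem preimage_image_qmap (hH : IsStronglyLSubgyrogroup H) (A : Set G) :
    qmap H ⁻¹' (qmap H '' A) = satSet H A := by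
  ext x
  constructor
  · rintro ⟨a, ha, he⟩
    have hm : -x + a ∈ H := (qmap_eq_iff hH).mp he.symm
    refine ⟨-x + a, hm, ?_⟩
    rw [cancel_left]
    exact ha
  · rintro ⟨h, hh, hmem⟩
    refine ⟨x + h, hmem, ?_⟩
    refine ((qmap_eq_iff hH).mpr ?_).symm
    rw [neg_cancel_left]
    exact hh

theorem mem_satSet_iff {A : Set G} {x : G} : x ∈ satSet H A ↔ ∃ h ∈ H, x + h ∈ A := Iff.rfl

theorem satSet_translate (hH : IsStronglyLSubgyrogroup H) (x : G) (V : Set G) :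
    satSet H ((fun v => x + v) '' V) = (fun v => x + v) '' satSet H V := by
  ext y
  constructor
  · rintro ⟨h, hh, v, hv, hxv⟩
    refine ⟨-x + y, ⟨gyr (-x) y h, gyrH hH _ _ hh, ?_⟩, cancel_left x y⟩
    have h2 : -x + (y + h) = (-x + y) + gyr (-x) y h := gyrassoc' _ _ _
    simp only at hxv
    rw [← h2, ← hxv, neg_cancel_left]
    exact hv
  · rintro ⟨w, ⟨h, hh, hwv⟩, rfl⟩
    refine ⟨gyr x w h, gyrH hH _ _ hh, ?_⟩
    show (x + w) + gyr x w h ∈ _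
    rw [← gyrassoc']
    exact ⟨w + h, hwv, rfl⟩

end GG

namespace GG

section Top

open Topology

variable [TopologicalSpace G] [TopologicalGyrogroup G]

theorem cont_add2 : Continuous fun p : G × G => p.1 + p.2 := TopologicalGyrogroup.continuous_add

theorem cont_neg1 : Continuous fun x : G => -x := TopologicalGyrogroup.continuous_neg

theorem Cont.gadd {X : Type*} [TopologicalSpace X] {f g : X → G} (hf : Continuous f)
    (hg : Continuous g) : Continuous fun x => f x + g x :=
  cont_add2.comp (hf.prodMk hg)

theorem Cont.gneg {X : Type*} [TopologicalSpace X] {f : X → G} (hf : Continuous f) :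
    Continuous fun x => -(f x) :=
  cont_neg1.comp hf

theorem Cont.ggyr {X : Type*} [TopologicalSpace X] {f g h : X → G} (hf : Continuous f)
    (hg : Continuous g) (hh : Continuous h) : Continuous fun x => gyr (f x) (g x) (h x) := by
  have he : (fun x => gyr (f x) (g x) (h x))
      = fun x => -(f x + g x) + (f x + (g x + h x)) := by
    funext x
    exact gyrator (f x) (g x) (h x)
  rw [he]
  exact Cont.gadd (Cont.gneg (Cont.gadd hf hg)) (Cont.gadd hf (Cont.gadd hg hh))

theorem cont_rdiv {X : Type*} [TopologicalSpace X] {f g : X → G} (hf : Continuous f)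
    (hg : Continuous g) : Continuous fun x => rdiv (f x) (g x) :=
  Cont.gadd hf (Cont.ggyr hf hg (Cont.gneg hg))

variable {H : Set G}

theorem satSet_eq_union (A : Set G) : satSet H A = ⋃ h ∈ H, (fun x => x + h) ⁻¹' A := by
  ext x
  simp only [satSet, Set.mem_setOf_eq, Set.mem_iUnion, Set.mem_preimage, exists_prop]

theorem isOpen_satSet {A : Set G} (hA : IsOpen A) : IsOpen (satSet H A) := by
  rw [satSet_eq_union]
  exact isOpen_biUnion fun h _ => hA.preimage (Cont.gadd continuous_id continuous_const)

theorem qmap_isQuotientMap : IsQuotientMap (qmap H) :=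
  isQuotientMap_quotient_mk'

theorem qmap_continuous : Continuous (qmap H) := qmap_isQuotientMap.continuous

theorem qmap_isOpenMap (hH : IsStronglyLSubgyrogroup H) : IsOpenMap (qmap H) := by
  intro U hU
  rw [← qmap_isQuotientMap.isOpen_preimage, preimage_image_qmap hH]
  exact isOpen_satSet hU

/-- Left translation as a homeomorphism. -/
def addLeftHomeo (x : G) : G ≃ₜ G where
  toFun := fun y => x + y
  invFun := fun y => -x + y
  left_inv := fun y => neg_cancel_left x y
  right_inv := fun y => cancel_left x y
  continuous_toFun := Cont.gadd continuous_const continuous_id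
  continuous_invFun := Cont.gadd continuous_const continuous_id

end Top

end GG

namespace GG

section Main

open Topology Filter

variable [TopologicalSpace G] [TopologicalGyrogroup G] {H : Set G}

set_option linter.unusedSectionVars false

theorem satSet_closed (hH : IsStronglyLSubgyrogroup H)
    (U₀ : Set G) (hU₀open : IsOpen U₀)
    (K : Set G) (hK : IsCompact K) (hKH : K ⊆ H)
    (hU₀K : ∀ g ∈ H, g ∈ U₀ → g ∈ K)
    (W₁ : Set G) (hW₁open : IsOpen W₁) (h0W₁ : (0:G) ∈ W₁)
    (V : Set G) (hVclosed : IsClosed V)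
    (hwin : ∀ e ∈ W₁, ∀ p ∈ V, ∀ q ∈ V, -(-e + p) + q ∈ U₀) :
    IsClosed (satSet H V) := by
  rw [isClosed_iff_clusterPt]
  intro z hz
  haveI hne : (𝓝 z ⊓ 𝓟 (satSet H V)).NeBot := hz
  set 𝒰 : Ultrafilter G := Ultrafilter.of (𝓝 z ⊓ 𝓟 (satSet H V)) with h𝒰
  have h𝒰le : ↑𝒰 ≤ 𝓝 z ⊓ 𝓟 (satSet H V) := Ultrafilter.of_le _
  have h𝒰z : ↑𝒰 ≤ 𝓝 z := h𝒰le.trans inf_le_left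
  have hxtend : Filter.Tendsto (fun x : G => x) ↑𝒰 (𝓝 z) := by
    exact Filter.tendsto_id'.2 h𝒰z
  have hsat𝒰 : satSet H V ∈ 𝒰 := le_principal_iff.mp (h𝒰le.trans inf_le_right)
  have hsatev : ∀ᶠ x in ↑𝒰, x ∈ satSet H V := hsat𝒰
  -- selection of coset witnesses
  have hselex : ∀ x, x ∈ satSet H V → ∃ h, h ∈ H ∧ x + h ∈ V := by
    intro x hx
    obtain ⟨h, hh, hv⟩ := hx
    exact ⟨h, hh, hv⟩
  choose! sel hselH hselV using hselex
  -- base point x* in satSet with rdiv x* z small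
  have hDcont : Continuous fun x : G => rdiv x z := cont_rdiv continuous_id continuous_const
  have hΩnhds : (fun x : G => rdiv x z) ⁻¹' W₁ ∈ 𝓝 z := by
    apply (hW₁open.preimage hDcont).mem_nhds
    show rdiv z z ∈ W₁
    rw [rdiv_self]
    exact h0W₁
  have hmem : (satSet H V ∩ (fun x : G => rdiv x z) ⁻¹' W₁) ∈ 𝒰 :=
    Filter.inter_mem hsat𝒰 (h𝒰z hΩnhds)
  obtain ⟨xs, hxs_sat, hxs_W⟩ := Ultrafilter.nonempty_of_mem hmem
  set hstar : G := sel xs with hhstar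
  set cstar : G := xs + sel xs with hcstar
  have hhsH : hstar ∈ H := hselH xs hxs_sat
  have hcsV : cstar ∈ V := hselV xs hxs_sat
  -- auxiliary functions
  set ε : G → G := fun x => rdiv xs x with hεdef
  set c' : G → G := fun x => -(ε x) + cstar with hc'def
  set h' : G → G := fun x => gyr (-x) (-(ε x)) hstar with hh'def
  set s : G → G := fun x => -(h' x) + sel x with hsdef
  set E : G → G := fun x => -(c' x) + (x + sel x) with hEdef
  -- identities
  have idA : ∀ x : G, x + h' x = c' x := by
    intro x
    have hrc : ε x + x = xs := rdiv_add xs x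
    have hgyr : gyr (ε x) x (h' x) = hstar := gyr_inv_cancel' (ε x) x hstar
    have h1 : ε x + (x + h' x) = (ε x + x) + gyr (ε x) x (h' x) := gyrassoc' _ _ _
    rw [hgyr, hrc] at h1
    have h2 : -(ε x) + (ε x + (x + h' x)) = -(ε x) + (xs + hstar) := by rw [h1]
    rw [neg_cancel_left] at h2
    exact h2
  have idh' : ∀ x : G, h' x = -x + c' x := by
    intro x
    rw [← idA x, neg_cancel_left]
  have idsel : ∀ x : G, sel x = h' x + s x := by
    intro x
    show sel x = h' x + (-(h' x) + sel x)
    rw [cancel_left]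
  have idsE : ∀ x : G, s x = gyr (-x) (c' x) (E x) := by
    intro x
    show -(h' x) + sel x = _
    have h1 : sel x = -x + (x + sel x) := (neg_cancel_left _ _).symm
    rw [idh' x]
    conv_lhs => rw [h1]
    exact same_left (-x) (c' x) (x + sel x)
  have idEs : ∀ x : G, E x = gyr (-(c' x)) x (s x) := by
    intro x
    have h := gyr_inv_cancel (-x) (c' x) (E x)
    rw [neg_neg'] at h
    rw [idsE x]
    exact h.symm
  -- memberships
  have hh'H : ∀ x : G, h' x ∈ H := fun x => gyrH hH _ _ hhsH
  have hsH : ∀ x, x ∈ satSet H V → s x ∈ H := fun x hx =>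
    addH hH.toIsSubgyrogroup (negH hH.toIsSubgyrogroup (hh'H x)) (hselH x hx)
  have hEH : ∀ x, x ∈ satSet H V → E x ∈ H := by
    intro x hx
    rw [idEs x]
    exact gyrH hH _ _ (hsH x hx)
  -- eventual membership of E in K
  have hεcont : Continuous ε := cont_rdiv continuous_const continuous_id
  have hεtend : Filter.Tendsto ε ↑𝒰 (𝓝 (rdiv xs z)) :=
    ((hεcont.tendsto z).comp hxtend :)
  have hεW₁ : ∀ᶠ x in ↑𝒰, ε x ∈ W₁ := hεtend (hW₁open.mem_nhds hxs_W)
  have hEU₀ : ∀ᶠ x in ↑𝒰, E x ∈ U₀ := by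
    filter_upwards [hεW₁, hsatev] with x he hx
    exact hwin (ε x) he cstar hcsV (x + sel x) (hselV x hx)
  have hEK : ∀ᶠ x in ↑𝒰, E x ∈ K := by
    filter_upwards [hEU₀, hsatev] with x h1 h2
    exact hU₀K _ (hEH x h2) h1
  have hKmem : K ∈ Ultrafilter.map E 𝒰 := by
    rw [Ultrafilter.mem_map]
    exact hEK
  obtain ⟨Estar, hEstarK, hEtendU⟩ :=
    hK.ultrafilter_le_nhds (Ultrafilter.map E 𝒰) (le_principal_iff.mpr hKmem)
  have hEtend : Filter.Tendsto E ↑𝒰 (𝓝 Estar) := by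
    rwa [Ultrafilter.coe_map] at hEtendU
  -- limits
  set ε₀ : G := rdiv xs z with hε₀
  set c'₀ : G := -ε₀ + cstar with hc'₀
  set h'₀ : G := gyr (-z) (-ε₀) hstar with hh'₀
  set s₀ : G := gyr (-z) c'₀ Estar with hs₀
  set hlim : G := h'₀ + s₀ with hhlim
  have hc'tend : Filter.Tendsto c' ↑𝒰 (𝓝 c'₀) := by
    have hc : Continuous fun w : G => -w + cstar :=
      Cont.gadd (Cont.gneg continuous_id) continuous_const
    exact ((hc.tendsto ε₀).comp hεtend :)
  have hh'tend : Filter.Tendsto h' ↑𝒰 (𝓝 h'₀) := by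
    have hc : Continuous fun p : G × G => gyr (-p.1) (-p.2) hstar :=
      Cont.ggyr (Cont.gneg continuous_fst) (Cont.gneg continuous_snd) continuous_const
    have hp : Filter.Tendsto (fun x : G => (x, ε x)) ↑𝒰 (𝓝 (z, ε₀)) :=
      hxtend.prodMk_nhds hεtend
    exact ((hc.tendsto (z, ε₀)).comp hp :)
  have hstend : Filter.Tendsto s ↑𝒰 (𝓝 s₀) := by
    have hc : Continuous fun p : G × G × G => gyr (-p.1) p.2.1 p.2.2 :=
      Cont.ggyr (Cont.gneg continuous_fst) (continuous_fst.comp continuous_snd)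
        (continuous_snd.comp continuous_snd)
    have hp : Filter.Tendsto (fun x : G => (x, c' x, E x)) ↑𝒰 (𝓝 (z, c'₀, Estar)) :=
      hxtend.prodMk_nhds (hc'tend.prodMk_nhds hEtend)
    have hT := ((hc.tendsto (z, c'₀, Estar)).comp hp :)
    exact hT.congr fun x => (idsE x).symm
  have hseltend : Filter.Tendsto sel ↑𝒰 (𝓝 hlim) := by
    have := Cont.gadd (continuous_fst : Continuous fun p : G × G => p.1)
      (continuous_snd : Continuous fun p : G × G => p.2)
    have hp : Filter.Tendsto (fun x : G => (h' x, s x)) ↑𝒰 (𝓝 (h'₀, s₀)) :=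
      hh'tend.prodMk_nhds hstend
    have h2 := ((this.tendsto (h'₀, s₀)).comp hp :)
    exact h2.congr fun x => (idsel x).symm
  have hctend : Filter.Tendsto (fun x : G => x + sel x) ↑𝒰 (𝓝 (z + hlim)) := by
    have hc : Continuous fun p : G × G => p.1 + p.2 := cont_add2
    have hp : Filter.Tendsto (fun x : G => (x, sel x)) ↑𝒰 (𝓝 (z, hlim)) :=
      hxtend.prodMk_nhds hseltend
    exact ((hc.tendsto (z, hlim)).comp hp :)
  have hzV : z + hlim ∈ V := by
    apply hVclosed.mem_of_tendsto hctend
    filter_upwards [hsatev] with x hx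
    exact hselV x hx
  have hlimH : hlim ∈ H := by
    apply addH hH.toIsSubgyrogroup
    · exact gyrH hH _ _ hhsH
    · exact gyrH hH _ _ (hKH hEstarK)
  exact ⟨hlim, hlimH, hzV⟩

end Main
end GG

namespace GG

section Assemble

open Topology Filter

variable [TopologicalSpace G] [TopologicalGyrogroup G]

set_option linter.unusedSectionVars false

theorem window_exists (U₀ : Set G) (hU₀open : IsOpen U₀) (h0U₀ : (0:G) ∈ U₀) :
    ∃ W₁ V₀ : Set G, IsOpen W₁ ∧ (0:G) ∈ W₁ ∧ IsOpen V₀ ∧ (0:G) ∈ V₀ ∧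
      ∀ e ∈ W₁, ∀ p ∈ V₀, ∀ q ∈ V₀, -(-e + p) + q ∈ U₀ := by
  have hcont : Continuous fun p : G × G × G => -(-p.1 + p.2.1) + p.2.2 :=
    Cont.gadd (Cont.gneg (Cont.gadd (Cont.gneg continuous_fst)
      (continuous_fst.comp continuous_snd))) (continuous_snd.comp continuous_snd)
  have hval : -(-(0:G) + (0:G)) + (0:G) = 0 := by
    rw [neg_zero', zero_add', neg_zero', zero_add']
  have hpre : (fun p : G × G × G => -(-p.1 + p.2.1) + p.2.2) ⁻¹' U₀ ∈ 𝓝 ((0,0,0) : G × G × G) := by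
    apply (hU₀open.preimage hcont).mem_nhds
    show -(-(0:G) + (0:G)) + (0:G) ∈ U₀
    rw [hval]
    exact h0U₀
  rw [mem_nhds_prod_iff] at hpre
  obtain ⟨u, hu, vw, hvw, huvw⟩ := hpre
  rw [mem_nhds_prod_iff] at hvw
  obtain ⟨v, hv, w, hw, hvww⟩ := hvw
  obtain ⟨u', hu'sub, hu'open, h0u'⟩ := mem_nhds_iff.mp hu
  obtain ⟨v', hv'sub, hv'open, h0v'⟩ := mem_nhds_iff.mp hv
  obtain ⟨w', hw'sub, hw'open, h0w'⟩ := mem_nhds_iff.mp hw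
  refine ⟨u', v' ∩ w', hu'open, h0u', hv'open.inter hw'open, ⟨h0v', h0w'⟩, ?_⟩
  intro e he p hp q hq
  exact huvw (Set.mk_mem_prod (hu'sub he)
    (hvww (Set.mk_mem_prod (hv'sub hp.1) (hw'sub hq.2))))

end Assemble
end GG

namespace GG

section Final

open Topology Filter TopologicalSpace

variable [TopologicalSpace G] [TopologicalGyrogroup G]

set_option linter.unusedSectionVars false

theorem main_thm [T2Space G] (hzd : IsZeroDimensional G) (H : Set G)
    (hH : IsStronglyLSubgyrogroup H) (hlc : LocallyCompactSpace H) :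
    IsZeroDimensional (GyroQuot H) := by
  obtain ⟨B, hBclopen, hBbasis⟩ := hzd
  have h0H : (0:G) ∈ H := zero_mem hH.toIsSubgyrogroup
  -- compact neighborhood of 0 in H
  obtain ⟨t, htnhds, _, htcomp⟩ :=
    LocallyCompactSpace.local_compact_nhds (⟨0, h0H⟩ : H) Set.univ Filter.univ_mem
  set K : Set G := Subtype.val '' t with hKdef
  have hKcomp : IsCompact K := htcomp.image continuous_subtype_val
  have hKH : K ⊆ H := by
    rintro g ⟨⟨g', hg'⟩, _, rfl⟩
    exact hg'
  obtain ⟨Unhd, hUnhd, hUsub⟩ := (mem_nhds_subtype H (⟨0, h0H⟩ : H) t).mp htnhds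
  obtain ⟨U₀, hU₀sub, hU₀open, h0U₀⟩ := mem_nhds_iff.mp hUnhd
  have hU₀K : ∀ g ∈ H, g ∈ U₀ → g ∈ K := by
    intro g hg hgU
    exact ⟨⟨g, hg⟩, hUsub (hU₀sub hgU), rfl⟩
  -- windows
  obtain ⟨W₁, V₀, hW₁open, h0W₁, hV₀open, h0V₀, hwin⟩ := window_exists U₀ hU₀open h0U₀
  -- the basis of clopen sets
  refine ⟨{C : Set (GyroQuot H) | IsClopen C}, fun U hU => hU, ?_⟩
  apply isTopologicalBasis_of_isOpen_of_nhds (fun C hC => hC.2)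
  intro q U hqU hUopen
  obtain ⟨x, rfl⟩ := Quotient.exists_rep q
  have hqx : Quotient.mk (cosetSetoid H) x = qmap H x := rfl
  rw [hqx] at hqU ⊢
  have hpre : IsOpen (qmap H ⁻¹' U) := hUopen.preimage qmap_continuous
  set S : Set G := (fun v => x + v) ⁻¹' (qmap H ⁻¹' U) with hSdef
  have hSopen : IsOpen S := hpre.preimage (Cont.gadd continuous_const continuous_id)
  have h0S : (0:G) ∈ S := by
    show qmap H (x + 0) ∈ U
    rw [add_zero']
    exact hqU
  obtain ⟨V, hVB, h0V, hVsub⟩ := hBbasis.exists_subset_of_mem_open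
    (⟨h0V₀, h0S⟩ : (0:G) ∈ V₀ ∩ S) (hV₀open.inter hSopen)
  have hVclopen : IsClopen V := hBclopen V hVB
  have hVwin : ∀ e ∈ W₁, ∀ p ∈ V, ∀ q' ∈ V, -(-e + p) + q' ∈ U₀ := by
    intro e he p hp q' hq'
    exact hwin e he p (hVsub hp).1 q' (hVsub hq').1
  have hVsatclosed : IsClosed (satSet H V) :=
    satSet_closed hH U₀ hU₀open K hKcomp hKH hU₀K W₁ hW₁open h0W₁ V
      hVclopen.1 hVwin
  set C : Set (GyroQuot H) := qmap H '' ((fun v => x + v) '' V) with hCdef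
  have hCopen : IsOpen C := by
    apply qmap_isOpenMap hH
    have : IsOpenMap fun v : G => x + v := (addLeftHomeo x).isOpenMap
    exact this V hVclopen.2
  have hCclosed : IsClosed C := by
    rw [← qmap_isQuotientMap.isClosed_preimage]
    rw [preimage_image_qmap hH, satSet_translate hH]
    have : IsClosedMap fun v : G => x + v := (addLeftHomeo x).isClosedMap
    exact this _ hVsatclosed
  refine ⟨C, ⟨hCclosed, hCopen⟩, ?_, ?_⟩
  · exact ⟨x + 0, ⟨0, h0V, rfl⟩, by rw [add_zero']⟩
  · rintro _ ⟨_, ⟨v, hv, rfl⟩, rfl⟩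
    exact (hVsub hv).2

end Final
end GG

end GyroAlgebra

/-- If `G` is a Hausdorff zero-dimensional topological gyrogroup and `H`
is a locally compact strongly L-subgyrogroup, then `G/H` is zero-dimensional. -/
theorem stmt_18 {G : Type u} [Gyrogroup G] [TopologicalSpace G] [TopologicalGyrogroup G]
    [T2Space G] (hzd : IsZeroDimensional G) (H : Set G)
    (hH : IsStronglyLSubgyrogroup H) (hlc : LocallyCompactSpace H) :
    IsZeroDimensional (GyroQuot H) := by
  exact GG.main_thm hzd H hH hlc
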